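/- The most reliable consistent sets of premisses are exactly the limit sets of believed premisses: for a reliability theory ⟨Σ, ≺⟩, the collection R of all most reliable consistent sets of premisses equals the collection { Δ∞^{≺'} | ≺' a strict linear order on Σ extending ≺ }, where Δ∞^{≺'} is the unique subset of Σ satisfying Δ∞^{≺'} = Σ \ Out_{A∞^{≺'}}(Δ∞^{≺'}). -/

import Mathlib

/-- Propositional formulas over atoms `α`, built with `¬` and `→`. -/
inductive Fml (α : Type) : Type
  | atom : α → Fml α
  | neg  : Fml α → Fml α
  | imp  : Fml α → Fml α → Fml α

/-- Satisfaction of a formula by an interpretation (a set of atoms). -/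
def Fml.sat {α : Type} (M : Set α) : Fml α → Prop
  | .atom a => a ∈ M
  | .neg φ => ¬ Fml.sat M φ
  | .imp φ ψ => Fml.sat M φ → Fml.sat M ψ

/-- Semantic entailment `S ⊨ φ`. -/
def Entails {α : Type} (S : Set (Fml α)) (φ : Fml α) : Prop :=
  ∀ M : Set α, (∀ ψ ∈ S, Fml.sat M ψ) → Fml.sat M φ

/-- Satisfiability of a set of formulas. -/
def Satisfiable {α : Type} (S : Set (Fml α)) : Prop :=
  ∃ M : Set α, ∀ ψ ∈ S, Fml.sat M ψ

/-- Propositional tautology. -/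
def Tautology {α : Type} (φ : Fml α) : Prop :=
  ∀ M : Set α, Fml.sat M φ

/-- `prec` is a reliability relation on `Sg`: a strict partial order
(irreflexive, asymmetric, transitive) relating only members of `Sg`. -/
def IsReliability {β : Type} (Sg : Set β) (prec : β → β → Prop) : Prop :=
  (∀ a b, prec a b → a ∈ Sg ∧ b ∈ Sg) ∧
  (∀ a, ¬ prec a a) ∧
  (∀ a b, prec a b → ¬ prec b a) ∧
  (∀ a b c, prec a b → prec b c → prec a c)

/-- `lt` is a strict linear order on `Sg` extending `prec`. -/
def IsLinearExt {β : Type} (Sg : Set β) (prec lt : β → β → Prop) : Prop :=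
  (∀ a b, lt a b → a ∈ Sg ∧ b ∈ Sg) ∧
  (∀ a, ¬ lt a a) ∧
  (∀ a b c, lt a b → lt b c → lt a c) ∧
  (∀ a ∈ Sg, ∀ b ∈ Sg, a ≠ b → lt a b ∨ lt b a) ∧
  (∀ a b, prec a b → lt a b)

/-- Arguments: supporting arguments `P ⇒ φ` and undermining arguments `P ⇏ φ`. -/
inductive Arg (α : Type) : Type
  | sup : Set (Fml α) → Fml α → Arg α
  | und : Set (Fml α) → Fml α → Arg α

/-- The set `A∞` of derivable arguments, as an inductive predicate:
initial arguments, the axiom rule, modus ponens and the contradiction rule. -/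
inductive Derivable {α : Type} (Sg : Set (Fml α)) (lt : Fml α → Fml α → Prop) :
    Arg α → Prop
  | initial {φ} (h : φ ∈ Sg) : Derivable Sg lt (.sup {φ} φ)
  | ax {φ} (h : Tautology φ) : Derivable Sg lt (.sup ∅ φ)
  | mp {P Q φ ψ} (h1 : Derivable Sg lt (.sup P φ))
      (h2 : Derivable Sg lt (.sup Q (.imp φ ψ))) :
      Derivable Sg lt (.sup (P ∪ Q) ψ)
  | contra {P Q φ η} (h1 : Derivable Sg lt (.sup P φ))
      (h2 : Derivable Sg lt (.sup Q (.neg φ)))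
      (hmem : η ∈ P ∪ Q) (hmin : ∀ x ∈ P ∪ Q, x ≠ η → lt η x) :
      Derivable Sg lt (.und ((P ∪ Q) \ {η}) η)

/-- The set `A∞` of derivable arguments. -/
def Ainf {α : Type} (Sg : Set (Fml α)) (lt : Fml α → Fml α → Prop) : Set (Arg α) :=
  {a | Derivable Sg lt a}

/-- `Out_A(S)`: premisses ruled out by undermining arguments in `A`
whose antecedents lie in `S`. -/
def OutA {α : Type} (A : Set (Arg α)) (S : Set (Fml α)) : Set (Fml α) :=
  {φ | ∃ P, Arg.und P φ ∈ A ∧ P ⊆ S}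

open scoped Classical in
/-- The most reliable consistent set of premisses built from an enumeration. -/
noncomputable def mrcBuild {α : Type} (l : List (Fml α)) : Set (Fml α) :=
  l.foldl (fun D σ => if Satisfiable (insert σ D) then insert σ D else D) ∅

/-- `l` enumerates `Sg` so that more reliable premisses come first:
whenever `l[j] ≺ l[k]` one has `k < j`. -/
def IsEnum {β : Type} (Sg : Set β) (prec : β → β → Prop) (l : List β) : Prop :=
  l.Nodup ∧ (∀ x, x ∈ l ↔ x ∈ Sg) ∧
  ∀ (j k : Fin l.length), prec (l.get j) (l.get k) → (k : ℕ) < (j : ℕ)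

/-- `D` is a most reliable consistent set of premisses of `⟨Sg, prec⟩`. -/
def MRC {α : Type} (Sg : Set (Fml α)) (prec : Fml α → Fml α → Prop)
    (D : Set (Fml α)) : Prop :=
  ∃ l : List (Fml α), IsEnum Sg prec l ∧ D = mrcBuild l

/-- `Prem(M)`: the premisses of `Sg` satisfied by interpretation `M`. -/
def PremOf {α : Type} (Sg : Set (Fml α)) (M : Set α) : Set (Fml α) :=
  {φ | φ ∈ Sg ∧ Fml.sat M φ}

/-- The preference relation `M ⊏ N` on interpretations. -/
def Pref {α : Type} (Sg : Set (Fml α)) (prec : Fml α → Fml α → Prop)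
    (M N : Set α) : Prop :=
  PremOf Sg M ≠ PremOf Sg N ∧
  ∀ φ ∈ PremOf Sg M \ PremOf Sg N, ∃ ψ ∈ PremOf Sg N \ PremOf Sg M, prec φ ψ

/-- `Th(⟨Sg, prec⟩)`: formulas entailed by every most reliable consistent set. -/
def ThR {α : Type} (Sg : Set (Fml α)) (prec : Fml α → Fml α → Prop) : Set (Fml α) :=
  {φ | ∀ D, MRC Sg prec D → Entails D φ}

/-- The reliability relation of the `a`-revised theory:
`prec` restricted to `Sg \ {a}`, with `a` strictly more reliable than
every other premiss. -/
def RevPrec {α : Type} (Sg : Set (Fml α)) (prec : Fml α → Fml α → Prop) (a : Fml α) :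
    Fml α → Fml α → Prop :=
  fun x y => (prec x y ∧ x ∈ Sg \ {a} ∧ y ∈ Sg \ {a}) ∨ (x ∈ Sg \ {a} ∧ y = a)
section AuxLemmas

variable {α : Type}

/-- Inversion / soundness for derivable arguments. -/
theorem aux_inv {Sg : Set (Fml α)} {lt : Fml α → Fml α → Prop} {a : Arg α}
    (h : Derivable Sg lt a) :
    match a with
    | .sup P φ => P ⊆ Sg ∧ Entails P φ
    | .und P φ => P ⊆ Sg ∧ φ ∈ Sg ∧ ¬ Satisfiable (insert φ P) ∧ ∀ x ∈ P, lt φ x := by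
  induction h with
  | @initial φ hφ =>
      show ({φ} : Set (Fml α)) ⊆ Sg ∧ Entails {φ} φ
      exact ⟨by simpa using hφ, fun M hM => hM _ rfl⟩
  | @ax φ ht =>
      show (∅ : Set (Fml α)) ⊆ Sg ∧ Entails ∅ φ
      exact ⟨by simp, fun M _ => ht M⟩
  | @mp P Q φ ψ h1 h2 ih1' ih2' =>
      have ih1 : P ⊆ Sg ∧ Entails P φ := ih1'
      have ih2 : Q ⊆ Sg ∧ Entails Q (.imp φ ψ) := ih2'
      show (P ∪ Q : Set (Fml α)) ⊆ Sg ∧ Entails (P ∪ Q) ψ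
      refine ⟨Set.union_subset ih1.1 ih2.1, fun M hM => ?_⟩
      have hP := ih1.2 M (fun ψ hψ => hM ψ (Or.inl hψ))
      have hQ := ih2.2 M (fun ψ hψ => hM ψ (Or.inr hψ))
      exact hQ hP
  | @contra P Q φ η h1 h2 hmem hmin ih1' ih2' =>
      have ih1 : P ⊆ Sg ∧ Entails P φ := ih1'
      have ih2 : Q ⊆ Sg ∧ Entails Q (.neg φ) := ih2'
      show ((P ∪ Q) \ {η} : Set (Fml α)) ⊆ Sg ∧ η ∈ Sg ∧
        ¬ Satisfiable (insert η ((P ∪ Q) \ {η})) ∧ ∀ x ∈ (P ∪ Q) \ {η}, lt η x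
      have hsub : P ∪ Q ⊆ Sg := Set.union_subset ih1.1 ih2.1
      refine ⟨fun x hx => hsub hx.1, hsub hmem, ?_, fun x hx => hmin x hx.1 hx.2⟩
      rintro ⟨M, hM⟩
      have hins : insert η ((P ∪ Q) \ {η}) = P ∪ Q := by
        ext x
        simp only [Set.mem_insert_iff, Set.mem_diff, Set.mem_singleton_iff]
        constructor
        · rintro (rfl | ⟨hx, _⟩); exact hmem; exact hx
        · intro hx; by_cases hxe : x = η
          · exact Or.inl hxe
          · exact Or.inr ⟨hx, hxe⟩
      rw [hins] at hM
      have hPφ := ih1.2 M (fun ψ hψ => hM ψ (Or.inl hψ))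
      have hQφ := ih2.2 M (fun ψ hψ => hM ψ (Or.inr hψ))
      exact hQφ hPφ

/-- Chained modus ponens along a list of premisses. -/
theorem aux_chain {Sg : Set (Fml α)} {lt : Fml α → Fml α → Prop} :
    ∀ (L : List (Fml α)) (P : Set (Fml α)) (χ : Fml α),
    Derivable Sg lt (.sup P (L.foldr Fml.imp χ)) → (∀ x ∈ L, x ∈ Sg) →
    Derivable Sg lt (.sup (P ∪ {x | x ∈ L}) χ)
  | [], P, χ, h, _ => by
      have : (P ∪ {x | x ∈ ([] : List (Fml α))}) = P := by simp
      rwa [this]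
  | a :: L, P, χ, h, hSg => by
      have h1 : Derivable Sg lt (.sup {a} a) := .initial (hSg a (by simp))
      have h2 := Derivable.mp h1 h
      have h3 := aux_chain L ({a} ∪ P) χ h2 (fun x hx => hSg x (by simp [hx]))
      have heq : (({a} : Set (Fml α)) ∪ P) ∪ {x | x ∈ L} = P ∪ {x | x ∈ a :: L} := by
        ext x
        simp only [Set.mem_union, Set.mem_singleton_iff, Set.mem_setOf_eq, List.mem_cons]
        tauto
      rwa [heq] at h3

theorem aux_satfold (M : Set α) :
    ∀ (L : List (Fml α)) (χ : Fml α),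
      ((∀ x ∈ L, Fml.sat M x) → Fml.sat M χ) → Fml.sat M (L.foldr Fml.imp χ)
  | [], χ, h => h (by simp)
  | a :: L, χ, h => by
      intro ha
      exact aux_satfold M L χ (fun hL => h (by
        intro x hx
        rcases List.mem_cons.1 hx with rfl | hx
        · exact ha
        · exact hL x hx))

/-- Completeness: an unsatisfiable finite set yields an undermining argument
against its `lt`-least member. -/
theorem aux_complete {Sg : Set (Fml α)} {lt : Fml α → Fml α → Prop}
    {S : Set (Fml α)} (hfinS : S.Finite) (hS : S ⊆ Sg) {φ : Fml α} (hφ : φ ∈ S)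
    (hunsat : ¬ Satisfiable S) (hmin : ∀ x ∈ S, x ≠ φ → lt φ x) :
    Derivable Sg lt (.und (S \ {φ}) φ) := by
  classical
  set L := hfinS.toFinset.toList with hLdef
  have hLmem : ∀ x, x ∈ L ↔ x ∈ S := by
    intro x; rw [hLdef, Finset.mem_toList, Set.Finite.mem_toFinset]
  have htaut : Tautology (L.foldr Fml.imp (Fml.neg φ)) := by
    intro M
    apply aux_satfold
    intro hall
    exact (hunsat ⟨M, fun ψ hψ => hall ψ ((hLmem ψ).2 hψ)⟩).elim
  have h0 : Derivable Sg lt (.sup ∅ (L.foldr Fml.imp (Fml.neg φ))) := .ax htaut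
  have h1 := aux_chain L ∅ _ h0 (fun x hx => hS ((hLmem x).1 hx))
  have hset : ((∅ : Set (Fml α)) ∪ {x | x ∈ L}) = S := by
    ext x; simp [hLmem x]
  rw [hset] at h1
  have h2 : Derivable Sg lt (.sup {φ} φ) := .initial (hS hφ)
  have h3 := Derivable.contra h2 h1 (Set.mem_union_right _ hφ)
    (by
      intro x hx hne
      rcases hx with hx | hx
      · exact absurd hx hne
      · exact hmin x hx hne)
  have heq : (({φ} : Set (Fml α)) ∪ S) \ {φ} = S \ {φ} := by
    ext x
    simp only [Set.mem_diff, Set.mem_union, Set.mem_singleton_iff]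
    tauto
  rwa [heq] at h3

end AuxLemmas
section AuxFold

variable {α : Type}

open scoped Classical in
/-- The greedy step function of `mrcBuild`. -/
noncomputable def auxF : Set (Fml α) → Fml α → Set (Fml α) :=
  fun D σ => if Satisfiable (insert σ D) then insert σ D else D

theorem aux_mrcBuild (l : List (Fml α)) : mrcBuild l = l.foldl auxF ∅ := rfl

theorem aux_step_sub (D : Set (Fml α)) (σ : Fml α) : auxF D σ ⊆ insert σ D := by
  unfold auxF
  split
  · exact fun x hx => hx
  · exact fun x hx => Set.mem_insert_of_mem _ hx

theorem aux_step_mono (D : Set (Fml α)) (σ : Fml α) : D ⊆ auxF D σ := by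
  unfold auxF
  split
  · exact fun x hx => Set.mem_insert_of_mem _ hx
  · exact fun x hx => hx

theorem aux_mono : ∀ (l : List (Fml α)) (D0 : Set (Fml α)), D0 ⊆ l.foldl auxF D0
  | [], _ => fun x hx => hx
  | a :: l, D0 => fun x hx => aux_mono l (auxF D0 a) (aux_step_mono D0 a hx)

theorem aux_sub : ∀ (l : List (Fml α)) (D0 : Set (Fml α)),
    l.foldl auxF D0 ⊆ D0 ∪ {x | x ∈ l}
  | [], _ => by simp
  | a :: l, D0 => by
      intro x hx
      have := aux_sub l (auxF D0 a) hx
      rcases this with h | h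
      · rcases aux_step_sub D0 a h with h | h
        · exact Or.inr (by simp [h])
        · exact Or.inl h
      · exact Or.inr (by simp; exact Or.inr h)

theorem aux_sat : ∀ (l : List (Fml α)) (D0 : Set (Fml α)),
    Satisfiable D0 → Satisfiable (l.foldl auxF D0)
  | [], _, h => h
  | a :: l, D0, h => by
      apply aux_sat l
      unfold auxF
      split
      · assumption
      · exact h

theorem aux_rej {lt : Fml α → Fml α → Prop} :
    ∀ (l : List (Fml α)) (D0 : Set (Fml α)) {φ : Fml α},
    (∀ x ∈ D0, ∀ y ∈ l, lt y x) → l.Pairwise (fun a b => lt b a) →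
    φ ∈ l → φ ∉ l.foldl auxF D0 →
    ∃ P, P ⊆ l.foldl auxF D0 ∧ (∀ x ∈ P, lt φ x) ∧ ¬ Satisfiable (insert φ P)
  | [], _, _, _, _, h, _ => absurd h (by simp)
  | a :: l, D0, φ, hD0, hpw, hφ, hnot => by
      rcases List.mem_cons.1 hφ with rfl | hφl
      · -- φ = a : it must have been rejected at this step
        by_cases hs : Satisfiable (insert φ D0)
        · exfalso
          apply hnot
          have : φ ∈ auxF D0 φ := by
            unfold auxF; rw [if_pos hs]; exact Set.mem_insert _ _
          exact aux_mono l _ this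
        · refine ⟨D0, ?_, ?_, hs⟩
          · have hD0' : auxF D0 φ = D0 := by unfold auxF; rw [if_neg hs]
            have : D0 ⊆ (φ :: l).foldl auxF D0 := by
              show D0 ⊆ l.foldl auxF (auxF D0 φ)
              rw [hD0']; exact aux_mono l D0
            exact this
          · exact fun x hx => hD0 x hx φ (by simp)
      · -- φ in the tail
        have hhead : ∀ y ∈ l, lt y a := fun y hy =>
          (List.pairwise_cons.1 hpw).1 y hy
        have hD1 : ∀ x ∈ auxF D0 a, ∀ y ∈ l, lt y x := by
          intro x hx y hy
          rcases aux_step_sub D0 a hx with rfl | hx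
          · exact hhead y hy
          · exact hD0 x hx y (List.mem_cons_of_mem _ hy)
        exact aux_rej l (auxF D0 a) hD1 (List.pairwise_cons.1 hpw).2 hφl hnot

/-- The fixed point property: `mrcBuild l` equals `Sg` minus the premisses it
rules out, for the linear order induced by `l`. -/
theorem aux_fix {Sg : Set (Fml α)} (hfin : Sg.Finite) {lt : Fml α → Fml α → Prop}
    (l : List (Fml α)) (hmem : ∀ x, x ∈ l ↔ x ∈ Sg)
    (hpw : l.Pairwise (fun a b => lt b a)) :
    mrcBuild l = Sg \ OutA (Ainf Sg lt) (mrcBuild l) := by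
  rw [aux_mrcBuild]
  set D := l.foldl auxF ∅ with hD
  have hDsub : D ⊆ Sg := by
    intro x hx
    have := aux_sub l ∅ hx
    rcases this with h | h
    · exact absurd h (Set.notMem_empty x)
    · exact (hmem x).1 h
  have hDsat : Satisfiable D := aux_sat l ∅ ⟨∅, by simp⟩
  ext φ
  constructor
  · intro hφ
    refine ⟨hDsub hφ, ?_⟩
    rintro ⟨P, hund, hPD⟩
    obtain ⟨-, -, hunsat, -⟩ :
        P ⊆ Sg ∧ φ ∈ Sg ∧ ¬ Satisfiable (insert φ P) ∧ ∀ x ∈ P, lt φ x :=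
      aux_inv hund
    apply hunsat
    obtain ⟨M, hM⟩ := hDsat
    refine ⟨M, fun ψ hψ => ?_⟩
    rcases hψ with rfl | hψ
    · exact hM ψ hφ
    · exact hM ψ (hPD hψ)
  · rintro ⟨hφSg, hnout⟩
    by_contra hφD
    obtain ⟨P, hPD, hlt, hunsat⟩ :=
      aux_rej l ∅ (fun x hx => absurd hx (Set.notMem_empty x)) hpw
        ((hmem φ).2 hφSg) hφD
    have hsub : insert φ P ⊆ Sg := by
      intro x hx
      rcases hx with rfl | hx
      · exact hφSg
      · exact hDsub (hPD hx)
    have hder := aux_complete (hfin.subset hsub) hsub (Set.mem_insert φ P) hunsat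
      (by
        intro x hx hne
        rcases hx with rfl | hx
        · exact absurd rfl hne
        · exact hlt x hx)
    apply hnout
    refine ⟨insert φ P \ {φ}, hder, ?_⟩
    intro x hx
    obtain ⟨hx1, hx2⟩ := hx
    rcases hx1 with rfl | hx1
    · exact absurd rfl hx2
    · exact hPD hx1

end AuxFold
section AuxOrder

variable {β : Type}

/-- A finite nonempty set has an element with nothing above it. -/
theorem aux_max {r : β → β → Prop} (hirr : ∀ a, ¬ r a a)
    (htr : ∀ a b c, r a b → r b c → r a c) :
    ∀ (s : Finset β), s.Nonempty → ∃ m ∈ s, ∀ b ∈ s, ¬ r m b := by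
  classical
  intro s
  induction s using Finset.induction_on with
  | empty => intro h; exact absurd h (by simp)
  | @insert a s ha IH =>
      intro _
      rcases s.eq_empty_or_nonempty with rfl | hne
      · exact ⟨a, by simp, by simp [hirr]⟩
      · obtain ⟨m, hm, hmax⟩ := IH hne
        by_cases hra : r m a
        · refine ⟨a, Finset.mem_insert_self _ _, ?_⟩
          intro b hb hab
          rcases Finset.mem_insert.1 hb with rfl | hb
          · exact hirr _ hab
          · exact hmax b hb (htr _ _ _ hra hab)
        · refine ⟨m, Finset.mem_insert_of_mem hm, ?_⟩
          intro b hb hmb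
          rcases Finset.mem_insert.1 hb with rfl | hb
          · exact hra hmb
          · exact hmax b hb hmb

/-- Any finite set linearly ordered by `r` can be listed in decreasing order. -/
theorem aux_sorted_list {r : β → β → Prop} (hirr : ∀ a, ¬ r a a)
    (htr : ∀ a b c, r a b → r b c → r a c) :
    ∀ (s : Finset β), (∀ a ∈ s, ∀ b ∈ s, a ≠ b → r a b ∨ r b a) →
    ∃ l : List β, l.Nodup ∧ (∀ x, x ∈ l ↔ x ∈ s) ∧
      l.Pairwise (fun a b => r b a) := by
  classical
  intro s
  induction s using Finset.strongInduction with
  | _ s IH =>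
      intro htot
      rcases s.eq_empty_or_nonempty with rfl | hne
      · exact ⟨[], by simp⟩
      · obtain ⟨m, hm, hmax⟩ := aux_max hirr htr s hne
        obtain ⟨l, hnd, hml, hpw⟩ := IH (s.erase m) (Finset.erase_ssubset hm)
          (fun a ha b hb hab =>
            htot a (Finset.mem_of_mem_erase ha) b (Finset.mem_of_mem_erase hb) hab)
        refine ⟨m :: l, ?_, ?_, ?_⟩
        · refine List.nodup_cons.2 ⟨?_, hnd⟩
          intro h
          exact (Finset.notMem_erase m s) ((hml m).1 h)
        · intro x
          rw [List.mem_cons, hml x, Finset.mem_erase]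
          constructor
          · rintro (rfl | ⟨_, hx⟩)
            · exact hm
            · exact hx
          · intro hx
            by_cases hxm : x = m
            · exact Or.inl hxm
            · exact Or.inr ⟨hxm, hx⟩
        · refine List.pairwise_cons.2 ⟨?_, hpw⟩
          intro b hb
          have hbs := (hml b).1 hb
          have hbm : b ≠ m := (Finset.mem_erase.1 hbs).1
          have hbs' : b ∈ s := Finset.mem_of_mem_erase hbs
          rcases htot m hm b hbs' (fun h => hbm h.symm) with h | h
          · exact absurd h (hmax b hbs')
          · exact h

end AuxOrder

section AuxUniq

variable {α : Type}

theorem aux_uniq_aux {Sg : Set (Fml α)} {lt : Fml α → Fml α → Prop}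
    {D D' : Set (Fml α)}
    (hD : D = Sg \ OutA (Ainf Sg lt) D) (hD' : D' = Sg \ OutA (Ainf Sg lt) D')
    {φ : Fml α} (hφD : φ ∈ D) (hφD' : φ ∉ D')
    (hagree : ∀ x, lt φ x → (x ∈ D ↔ x ∈ D')) : False := by
  have hφSg : φ ∈ Sg := (hD ▸ hφD).1
  have hφout : φ ∈ OutA (Ainf Sg lt) D' := by
    by_contra h
    exact hφD' (hD' ▸ ⟨hφSg, h⟩)
  obtain ⟨P, hund, hPD'⟩ := hφout
  obtain ⟨-, -, -, hlt⟩ :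
      P ⊆ Sg ∧ φ ∈ Sg ∧ ¬ Satisfiable (insert φ P) ∧ ∀ x ∈ P, lt φ x :=
    aux_inv hund
  have hPD : P ⊆ D := fun x hx => (hagree x (hlt x hx)).2 (hPD' hx)
  exact ((hD ▸ hφD).2) ⟨P, hund, hPD⟩

/-- Uniqueness of the fixed point. -/
theorem aux_uniq {Sg : Set (Fml α)} (hfin : Sg.Finite) {lt : Fml α → Fml α → Prop}
    (hirr : ∀ a, ¬ lt a a) (htr : ∀ a b c, lt a b → lt b c → lt a c)
    (htot : ∀ a ∈ Sg, ∀ b ∈ Sg, a ≠ b → lt a b ∨ lt b a)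
    {D D' : Set (Fml α)}
    (hD : D = Sg \ OutA (Ainf Sg lt) D) (hD' : D' = Sg \ OutA (Ainf Sg lt) D') :
    D = D' := by
  classical
  by_contra hne
  have hDsub : D ⊆ Sg := by rw [hD]; exact Set.diff_subset
  have hD'sub : D' ⊆ Sg := by rw [hD']; exact Set.diff_subset
  set T : Set (Fml α) := (D \ D') ∪ (D' \ D) with hT
  have hTsub : T ⊆ Sg := by
    rintro x (⟨hx, -⟩ | ⟨hx, -⟩)
    · exact hDsub hx
    · exact hD'sub hx
  have hTfin : T.Finite := hfin.subset hTsub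
  have hTne : T.Nonempty := by
    by_contra h
    apply hne
    rw [Set.not_nonempty_iff_eq_empty] at h
    ext x
    constructor
    · intro hx
      by_contra hx'
      have : x ∈ T := Or.inl ⟨hx, hx'⟩
      rw [h] at this; exact this
    · intro hx
      by_contra hx'
      have : x ∈ T := Or.inr ⟨hx, hx'⟩
      rw [h] at this; exact this
  obtain ⟨m, hmT, hmax⟩ := aux_max hirr htr hTfin.toFinset
    (by rwa [Set.Finite.toFinset_nonempty])
  rw [Set.Finite.mem_toFinset] at hmT
  have hmax' : ∀ b ∈ T, ¬ lt m b := fun b hb =>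
    hmax b (hTfin.mem_toFinset.2 hb)
  have hagree : ∀ x, lt m x → (x ∈ D ↔ x ∈ D') := by
    intro x hx
    by_contra h
    have hxT : x ∈ T := by
      by_cases h1 : x ∈ D
      · exact Or.inl ⟨h1, fun h2 => h ⟨fun _ => h2, fun _ => h1⟩⟩
      · have h2 : x ∈ D' := by
          by_contra h2
          exact h ⟨fun h' => absurd h' h1, fun h' => absurd h' h2⟩
        exact Or.inr ⟨h2, h1⟩
    exact hmax' x hxT hx
  rcases hmT with ⟨hmD, hmD'⟩ | ⟨hmD', hmD⟩
  · exact aux_uniq_aux hD hD' hmD hmD' hagree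
  · exact aux_uniq_aux hD' hD hmD' hmD (fun x hx => (hagree x hx).symm)

end AuxUniq

/-- The most reliable consistent sets of premisses are exactly the
limit sets of believed premisses, over all strict linear extensions `≺'`
of `≺`. -/
theorem mrc_eq_limit_believed {α : Type} (Sg : Set (Fml α)) (hfin : Sg.Finite)
    (prec : Fml α → Fml α → Prop) (hprec : IsReliability Sg prec) :
    {D | MRC Sg prec D} =
      {D | ∃ lt, IsLinearExt Sg prec lt ∧ D = Sg \ OutA (Ainf Sg lt) D} := by
  obtain ⟨hpmem, hpirr, hpasym, hptr⟩ := hprec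
  ext D
  simp only [Set.mem_setOf_eq]
  constructor
  · rintro ⟨l, ⟨hnd, hmem, henum⟩, rfl⟩
    -- the linear order induced by the enumeration: x < y iff y occurs earlier
    set lt : Fml α → Fml α → Prop :=
      fun x y => ∃ j k : Fin l.length, l.get j = x ∧ l.get k = y ∧ (k : ℕ) < (j : ℕ)
      with hltdef
    have hinj : ∀ {j k : Fin l.length}, l.get j = l.get k → j = k := by
      intro j k h
      exact (List.Nodup.get_inj_iff hnd).1 h
    have hle : IsLinearExt Sg prec lt := by
      refine ⟨?_, ?_, ?_, ?_, ?_⟩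
      · rintro a b ⟨j, k, hj, hk, -⟩
        exact ⟨(hmem a).1 (hj ▸ l.get_mem j), (hmem b).1 (hk ▸ l.get_mem k)⟩
      · rintro a ⟨j, k, hj, hk, hjk⟩
        have : j = k := hinj (hj.trans hk.symm)
        subst this
        exact absurd hjk (lt_irrefl _)
      · rintro a b c ⟨j, k, hj, hk, hjk⟩ ⟨j', k', hj', hk', hjk'⟩
        have : k = j' := hinj (hk.trans hj'.symm)
        subst this
        exact ⟨j, k', hj, hk', lt_trans hjk' hjk⟩
      · intro a ha b hb hab
        obtain ⟨j, hj⟩ := List.mem_iff_get.1 ((hmem a).2 ha)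
        obtain ⟨k, hk⟩ := List.mem_iff_get.1 ((hmem b).2 hb)
        have hjk : j ≠ k := fun h => hab (by rw [← hj, ← hk, h])
        rcases lt_or_gt_of_ne (fun h : (j : ℕ) = (k : ℕ) => hjk (Fin.ext h)) with h | h
        · exact Or.inr ⟨k, j, hk, hj, h⟩
        · exact Or.inl ⟨j, k, hj, hk, h⟩
      · intro a b hab
        obtain ⟨ha, hb⟩ := hpmem a b hab
        obtain ⟨j, hj⟩ := List.mem_iff_get.1 ((hmem a).2 ha)
        obtain ⟨k, hk⟩ := List.mem_iff_get.1 ((hmem b).2 hb)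
        have := henum j k (by rw [hj, hk]; exact hab)
        exact ⟨j, k, hj, hk, this⟩
    have hpw : l.Pairwise (fun a b => lt b a) := by
      rw [List.pairwise_iff_get]
      intro i j hij
      exact ⟨j, i, rfl, rfl, hij⟩
    exact ⟨lt, hle, aux_fix hfin l hmem hpw⟩
  · rintro ⟨lt, ⟨hlmem, hlirr, hltr, hltot, hlext⟩, hDfix⟩
    obtain ⟨l, hnd, hml, hpw⟩ := aux_sorted_list hlirr hltr hfin.toFinset
      (fun a ha b hb hab =>
        hltot a (hfin.mem_toFinset.1 ha) b (hfin.mem_toFinset.1 hb) hab)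
    have hmem : ∀ x, x ∈ l ↔ x ∈ Sg := by
      intro x; rw [hml x, Set.Finite.mem_toFinset]
    have hasym : ∀ a b, lt a b → ¬ lt b a := fun a b h1 h2 =>
      hlirr a (hltr a b a h1 h2)
    have henum : ∀ (j k : Fin l.length), prec (l.get j) (l.get k) → (k : ℕ) < (j : ℕ) := by
      intro j k hp
      have hlt : lt (l.get j) (l.get k) := hlext _ _ hp
      by_contra h
      push_neg at h
      rcases Nat.lt_or_ge (j : ℕ) (k : ℕ) with hjk | hjk
      · have := List.pairwise_iff_get.1 hpw j k (by exact hjk)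
        exact hasym _ _ hlt this
      · have : (j : ℕ) = (k : ℕ) := le_antisymm h hjk
        have : j = k := Fin.ext this
        subst this
        exact hlirr _ hlt
    have hfix' := aux_fix hfin l hmem hpw (lt := lt)
    have hDeq : D = mrcBuild l :=
      aux_uniq hfin hlirr hltr hltot hDfix hfix'
    exact ⟨l, ⟨hnd, hmem, henum⟩, hDeq⟩
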